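/- Let n ≥ 1, let 1 ≤ j ≤ n, and let α ≥ 1 and w < Q be positive integers with Q − w ≥ α. For each integer k with w ≤ k ≤ Q let c_k ≥ 0 be a constant, with c_k = 0 whenever (Q−k)/α is not a natural number, and assume c_w > 0 and c_Q > 0. Define Λ(x,r) = Σ_{k=w}^{Q} c_k |x_j|^{(Q−k)/α} r^k for x ∈ ℝⁿ and r > 0, and for a bounded open set Ω ⊆ ℝⁿ containing the origin set J_Ω(r) = ∫_Ω Λ(x,r)⁻¹ dx. Then: if Q − w = α, then J_Ω(r) ≈ r^{−(Q−α)} · ln(1/r) as r → 0⁺; if Q − w > α, then J_Ω(r) ≈ r^{−(Q−α)} as r → 0⁺. -/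

import Mathlib

open MeasureTheory

lemma aux_geom {a b θ : ℝ} (ha : 0 ≤ a) (hb : 0 ≤ b) (hθ0 : 0 ≤ θ) (hθ1 : θ ≤ 1) :
    a ^ (1 - θ) * b ^ θ ≤ a + b := by
  rcases le_total a b with h | h
  · calc a ^ (1 - θ) * b ^ θ ≤ b ^ (1 - θ) * b ^ θ :=
          mul_le_mul_of_nonneg_right (Real.rpow_le_rpow ha h (by linarith))
            (Real.rpow_nonneg hb θ)
        _ = b := by rw [← Real.rpow_add' hb (by norm_num)]; simp
        _ ≤ a + b := by linarith
  · calc a ^ (1 - θ) * b ^ θ ≤ a ^ (1 - θ) * a ^ θ :=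
          mul_le_mul_of_nonneg_left (Real.rpow_le_rpow hb h hθ0)
            (Real.rpow_nonneg ha _)
        _ = a := by rw [← Real.rpow_add' ha (by norm_num)]; simp
        _ ≤ a + b := by linarith

lemma aux_interp {t r : ℝ} (ht : 0 ≤ t) (hr : 0 < r) {α w Q k : ℕ} (hα : 0 < α)
    (hwk : w ≤ k) (hkQ : k ≤ Q) (hwQ : w < Q) :
    t ^ (((Q : ℝ) - k) / α) * r ^ k ≤ t ^ (((Q : ℝ) - w) / α) * r ^ w + r ^ Q := by
  set θ : ℝ := ((k : ℝ) - w) / ((Q : ℝ) - w) with hθdef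
  have hQw : (0:ℝ) < (Q : ℝ) - w := by
    have : (w:ℝ) < Q := by exact_mod_cast hwQ
    linarith
  have hαR : (0:ℝ) < (α:ℝ) := by exact_mod_cast hα
  have hkw : (0:ℝ) ≤ (k:ℝ) - w := by
    have : (w:ℝ) ≤ k := by exact_mod_cast hwk
    linarith
  have hθ0 : 0 ≤ θ := div_nonneg hkw hQw.le
  have hθ1 : θ ≤ 1 := by
    rw [hθdef, div_le_one hQw]
    have : (k:ℝ) ≤ Q := by exact_mod_cast hkQ
    linarith
  have hA : 0 ≤ t ^ (((Q : ℝ) - w) / α) * r ^ w :=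
    mul_nonneg (Real.rpow_nonneg ht _) (pow_nonneg hr.le _)
  have hB : (0:ℝ) ≤ r ^ Q := pow_nonneg hr.le _
  have key : t ^ (((Q : ℝ) - k) / α) * r ^ k
      = (t ^ (((Q : ℝ) - w) / α) * r ^ w) ^ (1 - θ) * (r ^ Q) ^ θ := by
    rw [Real.mul_rpow (Real.rpow_nonneg ht _) (pow_nonneg hr.le _),
      ← Real.rpow_natCast r Q, ← Real.rpow_natCast r w, ← Real.rpow_natCast r k,
      ← Real.rpow_mul ht, ← Real.rpow_mul hr.le, ← Real.rpow_mul hr.le,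
      mul_assoc, ← Real.rpow_add hr]
    have e1 : ((Q : ℝ) - k) / α = ((Q : ℝ) - w) / α * (1 - θ) := by
      rw [hθdef]; field_simp; ring
    have e2 : (k : ℝ) = (w : ℝ) * (1 - θ) + (Q : ℝ) * θ := by
      rw [hθdef]; field_simp; ring
    rw [e1, e2]
  rw [key]
  exact aux_geom hA hB hθ0 hθ1

lemma aux_fubini {n : ℕ} (j : Fin n) (g : ℝ → ℝ) (ρ : ℝ) :
    ∫ x in Set.pi Set.univ (fun _ : Fin n => Set.Icc (-ρ) ρ), g (x j)
      = (volume (Set.Icc (-ρ) ρ)).toReal ^ (n - 1) * ∫ t in Set.Icc (-ρ) ρ, g t := by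
  classical
  set S := Set.Icc (-ρ) ρ with hS
  have hSmeas : MeasurableSet S := measurableSet_Icc
  set f : Fin n → ℝ → ℝ := fun i t => if i = j then S.indicator g t else S.indicator 1 t with hf
  have step1 : ∀ x : Fin n → ℝ,
      (Set.pi Set.univ fun _ : Fin n => S).indicator (fun x => g (x j)) x = ∏ i, f i (x i) := by
    intro x
    by_cases hx : x ∈ Set.pi Set.univ fun _ : Fin n => S
    · rw [Set.indicator_of_mem hx]
      have hxi : ∀ i, x i ∈ S := fun i => hx i (Set.mem_univ i)
      have : ∀ i, f i (x i) = if i = j then g (x i) else 1 := by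
        intro i
        simp only [hf]
        by_cases hij : i = j <;>
          simp [hij, Set.indicator_of_mem (hxi i), Set.indicator_of_mem (hxi _)]
      simp_rw [this]
      rw [Finset.prod_ite_eq' Finset.univ j (fun i => g (x i))]
      simp
    · rw [Set.indicator_of_notMem hx]
      rw [Set.mem_pi] at hx
      push_neg at hx
      obtain ⟨i₀, -, hi₀⟩ := hx
      refine (Finset.prod_eq_zero (Finset.mem_univ i₀) ?_).symm
      simp only [hf]
      by_cases hij : i₀ = j
      · rw [if_pos hij, Set.indicator_of_notMem hi₀]
      · rw [if_neg hij, Set.indicator_of_notMem hi₀]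
  have step2 : ∫ x in Set.pi Set.univ fun _ : Fin n => S, g (x j)
      = ∫ x : Fin n → ℝ, ∏ i, f i (x i) := by
    rw [← MeasureTheory.integral_indicator (MeasurableSet.univ_pi fun _ => hSmeas)]
    exact integral_congr_ae (Filter.Eventually.of_forall step1)
  rw [step2, MeasureTheory.integral_fintype_prod_volume_eq_prod f]
  have hfi : ∀ i : Fin n, (∫ t, f i t) = if i = j then ∫ t in S, g t else (volume S).toReal := by
    intro i
    by_cases hij : i = j
    · simp only [hf, hij, if_true]
      exact MeasureTheory.integral_indicator hSmeas
    · simp only [hf, hij, if_false]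
      rw [MeasureTheory.integral_indicator hSmeas]
      simp [MeasureTheory.setIntegral_const, Measure.real]
  simp_rw [hfi]
  rw [← Finset.mul_prod_erase Finset.univ _ (Finset.mem_univ j), if_pos rfl]
  rw [Finset.prod_congr rfl fun i hi => if_neg (Finset.ne_of_mem_erase hi),
    Finset.prod_const, Finset.card_erase_of_mem (Finset.mem_univ j), Finset.card_univ,
    Fintype.card_fin]
  ring

lemma aux_cont {β b a : ℝ} (hβ0 : 0 ≤ β) (hb : 0 ≤ b) (ha : 0 < a) :
    Continuous fun t : ℝ => (|t| ^ β * b + a)⁻¹ := by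
  apply Continuous.inv₀
  · exact ((continuous_abs.rpow_const fun x => Or.inr hβ0).mul continuous_const).add
      continuous_const
  · intro t
    have : 0 ≤ |t| ^ β * b := mul_nonneg (Real.rpow_nonneg (abs_nonneg t) _) hb
    positivity

lemma aux_sym {β b a ρ : ℝ} (hβ0 : 0 ≤ β) (hb : 0 ≤ b) (ha : 0 < a) (hρ : 0 ≤ ρ) :
    ∫ t in Set.Icc (-ρ) ρ, (|t| ^ β * b + a)⁻¹
      = 2 * ∫ t in (0:ℝ)..ρ, (|t| ^ β * b + a)⁻¹ := by
  have hcont := aux_cont hβ0 hb ha (β := β)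
  have h1 : ∫ t in Set.Icc (-ρ) ρ, (|t| ^ β * b + a)⁻¹
      = ∫ t in (-ρ)..ρ, (|t| ^ β * b + a)⁻¹ := by
    rw [intervalIntegral.integral_of_le (by linarith), MeasureTheory.integral_Icc_eq_integral_Ioc]
  have h2 : ∫ t in (-ρ)..(0:ℝ), (|t| ^ β * b + a)⁻¹
      = ∫ t in (0:ℝ)..ρ, (|t| ^ β * b + a)⁻¹ := by
    have := intervalIntegral.integral_comp_neg
      (fun t => (|t| ^ β * b + a)⁻¹) (a := 0) (b := ρ)
    simp only [abs_neg, neg_zero] at this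
    exact this.symm
  have h3 : ∫ t in (-ρ)..ρ, (|t| ^ β * b + a)⁻¹
      = (∫ t in (-ρ)..(0:ℝ), (|t| ^ β * b + a)⁻¹) + ∫ t in (0:ℝ)..ρ, (|t| ^ β * b + a)⁻¹ :=
    (intervalIntegral.integral_add_adjacent_intervals
      (hcont.intervalIntegrable _ _) (hcont.intervalIntegrable _ _)).symm
  rw [h1, h3, h2]; ring

lemma aux_strip_abs {β b a ρ : ℝ} (hρ : 0 ≤ ρ) :
    ∫ t in (0:ℝ)..ρ, (|t| ^ β * b + a)⁻¹ = ∫ t in (0:ℝ)..ρ, (t ^ β * b + a)⁻¹ := by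
  apply intervalIntegral.integral_congr
  intro t ht
  rw [Set.uIcc_of_le hρ] at ht
  show (|t| ^ β * b + a)⁻¹ = (t ^ β * b + a)⁻¹
  rw [abs_of_nonneg ht.1]

lemma aux_log_eq {b a ρ : ℝ} (hb : 0 < b) (ha : 0 < a) (hρ : 0 ≤ ρ) :
    ∫ t in (0:ℝ)..ρ, (t * b + a)⁻¹ = b⁻¹ * Real.log ((ρ * b + a) / a) := by
  have h1 : ∀ t : ℝ, (t * b + a)⁻¹ = (fun u : ℝ => u⁻¹) (b * t + a) := by
    intro t; rw [mul_comm]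
  simp_rw [h1]
  rw [intervalIntegral.integral_comp_mul_add (fun u : ℝ => u⁻¹) (ne_of_gt hb) a]
  rw [mul_zero, zero_add, integral_inv]
  · rw [smul_eq_mul, mul_comm b ρ]
  · rw [Set.uIcc_of_le (by nlinarith)]
    intro h0
    exact absurd h0.1 (by push_neg; exact ha)

lemma aux_contOn {β b a c d : ℝ} (hβ0 : 0 < β) (hb : 0 ≤ b) (ha : 0 < a) (hc : 0 ≤ c) :
    ContinuousOn (fun t : ℝ => (t ^ β * b + a)⁻¹) (Set.Icc c d) := by
  apply ContinuousOn.inv₀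
  · apply ContinuousOn.add (ContinuousOn.mul ?_ continuousOn_const) continuousOn_const
    intro t ht
    exact (Real.continuousAt_rpow_const t β (Or.inr hβ0.le)).continuousWithinAt
  · intro t ht
    have h0 : 0 ≤ t ^ β * b := mul_nonneg (Real.rpow_nonneg (hc.trans ht.1) _) hb
    positivity

lemma aux_pow_lower {β b a s ρ : ℝ} (hβ0 : 0 < β) (hb : 0 ≤ b) (ha : 0 < a)
    (hs : 0 < s) (hsρ : s ≤ ρ) (hkey : s ^ β * b ≤ a) :
    s / (2 * a) ≤ ∫ t in (0:ℝ)..ρ, (t ^ β * b + a)⁻¹ := by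
  have hcont : ContinuousOn (fun t : ℝ => (t ^ β * b + a)⁻¹) (Set.Icc 0 ρ) :=
    aux_contOn hβ0 hb ha le_rfl
  have hint1 : IntervalIntegrable (fun t : ℝ => (t ^ β * b + a)⁻¹) volume 0 s := by
    apply (hcont.mono ?_).intervalIntegrable
    rw [Set.uIcc_of_le hs.le]
    exact Set.Icc_subset_Icc le_rfl hsρ
  have hint2 : IntervalIntegrable (fun t : ℝ => (t ^ β * b + a)⁻¹) volume s ρ := by
    apply (hcont.mono ?_).intervalIntegrable
    rw [Set.uIcc_of_le hsρ]
    exact Set.Icc_subset_Icc hs.le le_rfl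
  have hsplit : ∫ t in (0:ℝ)..ρ, (t ^ β * b + a)⁻¹
      = (∫ t in (0:ℝ)..s, (t ^ β * b + a)⁻¹) + ∫ t in s..ρ, (t ^ β * b + a)⁻¹ :=
    (intervalIntegral.integral_add_adjacent_intervals hint1 hint2).symm
  have h2 : 0 ≤ ∫ t in s..ρ, (t ^ β * b + a)⁻¹ := by
    apply intervalIntegral.integral_nonneg hsρ
    intro t ht
    have h0 : 0 ≤ t ^ β * b := mul_nonneg (Real.rpow_nonneg (hs.le.trans ht.1) _) hb
    positivity
  have h1 : s / (2 * a) ≤ ∫ t in (0:ℝ)..s, (t ^ β * b + a)⁻¹ := by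
    have hmono : ∀ t ∈ Set.Icc (0:ℝ) s, (2 * a)⁻¹ ≤ (t ^ β * b + a)⁻¹ := by
      intro t ht
      apply inv_anti₀
      · have h0 : 0 ≤ t ^ β * b := mul_nonneg (Real.rpow_nonneg ht.1 _) hb
        positivity
      · have htβ : t ^ β ≤ s ^ β := Real.rpow_le_rpow ht.1 ht.2 hβ0.le
        nlinarith [mul_le_mul_of_nonneg_right htβ hb]
    calc s / (2 * a) = ∫ _ in (0:ℝ)..s, (2 * a)⁻¹ := by
          rw [intervalIntegral.integral_const, smul_eq_mul, sub_zero, div_eq_mul_inv]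
        _ ≤ ∫ t in (0:ℝ)..s, (t ^ β * b + a)⁻¹ :=
          intervalIntegral.integral_mono_on hs.le (intervalIntegrable_const) hint1 hmono
  linarith [hsplit, h1, h2]

lemma aux_pow_upper {β b a s ρ : ℝ} (hβ1 : 1 < β) (hb : 0 < b) (ha : 0 < a)
    (hs : 0 < s) (hsρ : s ≤ ρ) :
    ∫ t in (0:ℝ)..ρ, (t ^ β * b + a)⁻¹ ≤ s / a + b⁻¹ * (s ^ (1 - β) / (β - 1)) := by
  have hβ0 : (0:ℝ) < β := by linarith
  have hcont : ContinuousOn (fun t : ℝ => (t ^ β * b + a)⁻¹) (Set.Icc 0 ρ) :=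
    aux_contOn hβ0 hb.le ha le_rfl
  have hint1 : IntervalIntegrable (fun t : ℝ => (t ^ β * b + a)⁻¹) volume 0 s := by
    apply (hcont.mono ?_).intervalIntegrable
    rw [Set.uIcc_of_le hs.le]; exact Set.Icc_subset_Icc le_rfl hsρ
  have hint2 : IntervalIntegrable (fun t : ℝ => (t ^ β * b + a)⁻¹) volume s ρ := by
    apply (hcont.mono ?_).intervalIntegrable
    rw [Set.uIcc_of_le hsρ]; exact Set.Icc_subset_Icc hs.le le_rfl
  have hintr : IntervalIntegrable (fun t : ℝ => b⁻¹ * t ^ (-β)) volume s ρ := by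
    apply ContinuousOn.intervalIntegrable
    apply ContinuousOn.mul continuousOn_const
    intro t ht
    rw [Set.uIcc_of_le hsρ] at ht
    exact (Real.continuousAt_rpow_const t (-β) (Or.inl (ne_of_gt (hs.trans_le ht.1)))).continuousWithinAt
  have hsplit : ∫ t in (0:ℝ)..ρ, (t ^ β * b + a)⁻¹
      = (∫ t in (0:ℝ)..s, (t ^ β * b + a)⁻¹) + ∫ t in s..ρ, (t ^ β * b + a)⁻¹ :=
    (intervalIntegral.integral_add_adjacent_intervals hint1 hint2).symm
  have h1 : ∫ t in (0:ℝ)..s, (t ^ β * b + a)⁻¹ ≤ s / a := by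
    calc ∫ t in (0:ℝ)..s, (t ^ β * b + a)⁻¹ ≤ ∫ _ in (0:ℝ)..s, a⁻¹ := by
          apply intervalIntegral.integral_mono_on hs.le hint1 intervalIntegrable_const
          intro t ht
          apply inv_anti₀ ha
          have h0 : 0 ≤ t ^ β * b := mul_nonneg (Real.rpow_nonneg ht.1 _) hb.le
          linarith
        _ = s / a := by
          rw [intervalIntegral.integral_const, smul_eq_mul, sub_zero, div_eq_mul_inv]
  have h2 : ∫ t in s..ρ, (t ^ β * b + a)⁻¹ ≤ b⁻¹ * (s ^ (1 - β) / (β - 1)) := by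
    have hstep : ∀ t ∈ Set.Icc s ρ, (t ^ β * b + a)⁻¹ ≤ b⁻¹ * t ^ (-β) := by
      intro t ht
      have htpos : 0 < t := hs.trans_le ht.1
      have htβ : 0 < t ^ β := Real.rpow_pos_of_pos htpos β
      rw [Real.rpow_neg htpos.le, ← mul_inv]
      apply inv_anti₀ (by positivity)
      rw [mul_comm]
      linarith
    calc ∫ t in s..ρ, (t ^ β * b + a)⁻¹ ≤ ∫ t in s..ρ, b⁻¹ * t ^ (-β) :=
          intervalIntegral.integral_mono_on hsρ hint2 hintr hstep
        _ = b⁻¹ * ∫ t in s..ρ, t ^ (-β) := intervalIntegral.integral_const_mul _ _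
        _ = b⁻¹ * ((ρ ^ (-β + 1) - s ^ (-β + 1)) / (-β + 1)) := by
          rw [integral_rpow]
          right
          constructor
          · intro h; linarith [h, neg_eq_iff_eq_neg.mp h]
          · rw [Set.uIcc_of_le hsρ]
            intro h0
            exact absurd h0.1 (by push_neg; exact hs)
        _ ≤ b⁻¹ * (s ^ (1 - β) / (β - 1)) := by
          apply mul_le_mul_of_nonneg_left ?_ (by positivity)
          have hρβ : 0 ≤ ρ ^ (-β + 1) := Real.rpow_nonneg (hs.trans_le hsρ).le _
          have heq : -β + 1 = 1 - β := by ring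
          rw [heq] at hρβ ⊢
          have hflip : (ρ ^ (1 - β) - s ^ (1 - β)) / (1 - β)
              = (s ^ (1 - β) - ρ ^ (1 - β)) / (β - 1) := by
            have hne : (1:ℝ) - β ≠ 0 := by intro h; rw [sub_eq_zero] at h; linarith
            have hne2 : β - (1:ℝ) ≠ 0 := by intro h; rw [sub_eq_zero] at h; linarith
            field_simp
            ring
          rw [hflip, div_le_div_iff₀ (by linarith) (by linarith)]
          nlinarith [Real.rpow_nonneg hs.le (1 - β)]
  linarith [hsplit, h1, h2]

lemma aux_pick {Cl Cu : ℝ} (hCl : 0 < Cl) (hCu : 0 < Cu) :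
    ∃ C : ℝ, 1 ≤ C ∧ ∀ X J : ℝ, 0 ≤ X → Cl * X ≤ J → J ≤ Cu * X →
      C⁻¹ * X ≤ J ∧ J ≤ C * X := by
  refine ⟨max 1 (max Cu Cl⁻¹), le_max_left _ _, fun X J hX h1 h2 => ?_⟩
  have hC1 : (0:ℝ) < max 1 (max Cu Cl⁻¹) := lt_of_lt_of_le one_pos (le_max_left _ _)
  constructor
  · have hinv : (max 1 (max Cu Cl⁻¹))⁻¹ ≤ Cl := by
      rw [inv_le_comm₀ hC1 hCl]
      exact le_trans (le_max_right Cu Cl⁻¹) (le_max_right _ _)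
    exact le_trans (mul_le_mul_of_nonneg_right hinv hX) h1
  · exact le_trans h2 (mul_le_mul_of_nonneg_right
      (le_trans (le_max_left Cu _) (le_max_right _ _)) hX)

lemma aux_chain (n : ℕ) (j : Fin n) (α w Q : ℕ)
    (hα : 1 ≤ α) (hwQ : w < Q) (hαQw : α ≤ Q - w)
    (c : ℕ → ℝ)
    (hc_nonneg : ∀ k ∈ Finset.Icc w Q, 0 ≤ c k)
    (hcw : 0 < c w) (hcQ : 0 < c Q)
    (Ω : Set (Fin n → ℝ)) (hΩo : IsOpen Ω) (hΩb : Bornology.IsBounded Ω)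
    (M δ : ℝ) (hδ0 : 0 < δ) (hδM : δ ≤ M)
    (hcube : Set.pi Set.univ (fun _ : Fin n => Set.Icc (-δ) δ) ⊆ Ω)
    (hbox : Ω ⊆ Set.pi Set.univ (fun _ : Fin n => Set.Icc (-M) M))
    (r : ℝ) (hr : 0 < r) :
    ((c w + c Q + ∑ k ∈ Finset.Icc w Q, c k)⁻¹ *
        ((2*δ) ^ (n-1) * (2 * ∫ t in (0:ℝ)..δ, (t ^ (((Q:ℝ) - w) / α) * r^w + r^Q)⁻¹))
      ≤ ∫ x in Ω, (∑ k ∈ Finset.Icc w Q,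
            c k * |x j| ^ (((Q : ℝ) - k) / α) * r ^ k)⁻¹) ∧
    (∫ x in Ω, (∑ k ∈ Finset.Icc w Q,
            c k * |x j| ^ (((Q : ℝ) - k) / α) * r ^ k)⁻¹
      ≤ (min (c w) (c Q))⁻¹ *
        ((2*M) ^ (n-1) * (2 * ∫ t in (0:ℝ)..M, (t ^ (((Q:ℝ) - w) / α) * r^w + r^Q)⁻¹))) := by
  have hα0 : 0 < α := hα
  have hαR : (0:ℝ) < (α:ℝ) := by exact_mod_cast hα0
  have hM0 : 0 < M := lt_of_lt_of_le hδ0 hδM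
  set β : ℝ := ((Q:ℝ) - w) / α with hβdef
  have hQwR : (0:ℝ) < (Q:ℝ) - w := by
    have : (w:ℝ) < Q := by exact_mod_cast hwQ
    linarith
  have hβ0 : 0 < β := div_pos hQwR hαR
  have hb : (0:ℝ) < r ^ w := pow_pos hr w
  have ha : (0:ℝ) < r ^ Q := pow_pos hr Q
  set m : ℝ := min (c w) (c Q) with hmdef
  have hm : 0 < m := lt_min hcw hcQ
  set CS : ℝ := c w + c Q + ∑ k ∈ Finset.Icc w Q, c k with hCSdef
  have hsum_nonneg : (0:ℝ) ≤ ∑ k ∈ Finset.Icc w Q, c k :=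
    Finset.sum_nonneg hc_nonneg
  have hCS : 0 < CS := by positivity
  set g1 : ℝ → ℝ := fun t => (|t| ^ β * r ^ w + r ^ Q)⁻¹ with hg1def
  set G : (Fin n → ℝ) → ℝ := fun x => g1 (x j) with hGdef
  set Λ : (Fin n → ℝ) → ℝ := fun x => ∑ k ∈ Finset.Icc w Q,
    c k * |x j| ^ (((Q : ℝ) - k) / α) * r ^ k with hΛdef
  -- pointwise positivity and bounds
  have hABpos : ∀ x : Fin n → ℝ, 0 < |x j| ^ β * r ^ w + r ^ Q := by
    intro x
    have h0 : 0 ≤ |x j| ^ β * r ^ w :=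
      mul_nonneg (Real.rpow_nonneg (abs_nonneg _) _) hb.le
    linarith
  have hΛup : ∀ x : Fin n → ℝ, Λ x ≤ CS * (|x j| ^ β * r ^ w + r ^ Q) := by
    intro x
    have h1 : Λ x ≤ ∑ k ∈ Finset.Icc w Q, c k * (|x j| ^ β * r ^ w + r ^ Q) := by
      apply Finset.sum_le_sum
      intro k hk
      rw [Finset.mem_Icc] at hk
      rw [mul_assoc]
      exact mul_le_mul_of_nonneg_left
        (aux_interp (abs_nonneg _) hr hα0 hk.1 hk.2 hwQ)
        (hc_nonneg k (Finset.mem_Icc.mpr hk))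
    rw [← Finset.sum_mul] at h1
    apply h1.trans
    apply mul_le_mul_of_nonneg_right _ (hABpos x).le
    rw [hCSdef]
    linarith
  have hΛlo : ∀ x : Fin n → ℝ, m * (|x j| ^ β * r ^ w + r ^ Q) ≤ Λ x := by
    intro x
    have hwQne : w ≠ Q := ne_of_lt hwQ
    have hpair : ({w, Q} : Finset ℕ) ⊆ Finset.Icc w Q := by
      intro k hk
      rcases Finset.mem_insert.mp hk with h | h
      · subst h; exact Finset.mem_Icc.mpr ⟨le_rfl, hwQ.le⟩
      · rw [Finset.mem_singleton] at h; subst h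
        exact Finset.mem_Icc.mpr ⟨hwQ.le, le_rfl⟩
    have hsum2 : ∑ k ∈ ({w, Q} : Finset ℕ),
        c k * |x j| ^ (((Q : ℝ) - k) / α) * r ^ k ≤ Λ x := by
      apply Finset.sum_le_sum_of_subset_of_nonneg hpair
      intro k hk _
      rw [Finset.mem_Icc] at hk
      have h1 : (0:ℝ) ≤ |x j| ^ (((Q : ℝ) - k) / α) := Real.rpow_nonneg (abs_nonneg _) _
      have h2 : (0:ℝ) ≤ r ^ k := pow_pos hr k |>.le
      have := hc_nonneg k (Finset.mem_Icc.mpr hk)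
      positivity
    rw [Finset.sum_pair hwQne] at hsum2
    have hQterm : c Q * |x j| ^ (((Q : ℝ) - Q) / α) * r ^ Q = c Q * r ^ Q := by
      rw [sub_self, zero_div, Real.rpow_zero, mul_one]
    rw [hQterm] at hsum2
    refine le_trans ?_ hsum2
    have h1 : m * (|x j| ^ β * r ^ w) ≤ c w * |x j| ^ (((Q : ℝ) - w) / α) * r ^ w := by
      rw [← mul_assoc]
      apply mul_le_mul_of_nonneg_right _ hb.le
      exact mul_le_mul_of_nonneg_right (min_le_left _ _) (Real.rpow_nonneg (abs_nonneg _) _)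
    have h2 : m * r ^ Q ≤ c Q * r ^ Q :=
      mul_le_mul_of_nonneg_right (min_le_right _ _) ha.le
    calc m * (|x j| ^ β * r ^ w + r ^ Q)
        = m * (|x j| ^ β * r ^ w) + m * r ^ Q := by ring
      _ ≤ c w * |x j| ^ (((Q : ℝ) - w) / α) * r ^ w + c Q * r ^ Q := add_le_add h1 h2
  have hΛpos : ∀ x : Fin n → ℝ, 0 < Λ x := fun x =>
    lt_of_lt_of_le (by positivity) (hΛlo x)
  have hinv_up : ∀ x : Fin n → ℝ, (Λ x)⁻¹ ≤ m⁻¹ * G x := by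
    intro x
    have h := inv_anti₀ (by positivity) (hΛlo x)
    rwa [mul_inv] at h
  have hinv_lo : ∀ x : Fin n → ℝ, CS⁻¹ * G x ≤ (Λ x)⁻¹ := by
    intro x
    have h := inv_anti₀ (hΛpos x) (hΛup x)
    rwa [mul_inv] at h
  -- continuity / integrability
  have hg1cont : Continuous g1 := aux_cont hβ0.le hb.le ha
  have hGcont : Continuous G := hg1cont.comp (continuous_apply j)
  have hΛinvcont : Continuous fun x => (Λ x)⁻¹ := by
    apply Continuous.inv₀ _ fun x => (hΛpos x).ne'
    apply continuous_finset_sum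
    intro k hk
    rw [Finset.mem_Icc] at hk
    have hek : (0:ℝ) ≤ ((Q : ℝ) - k) / α := by
      apply div_nonneg _ hαR.le
      have : (k:ℝ) ≤ Q := by exact_mod_cast hk.2
      linarith
    exact (continuous_const.mul
      ((continuous_abs.comp (continuous_apply j)).rpow_const fun _ => Or.inr hek)).mul
      continuous_const
  have integ : ∀ (f : (Fin n → ℝ) → ℝ), Continuous f →
      ∀ s : Set (Fin n → ℝ), Bornology.IsBounded s → IntegrableOn f s volume := by
    intro f hf s hs
    exact (hf.continuousOn.integrableOn_compact
      (Metric.isCompact_of_isClosed_isBounded isClosed_closure hs.closure)).mono_set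
      subset_closure
  have hboxbdd : Bornology.IsBounded (Set.pi Set.univ fun _ : Fin n => Set.Icc (-M) M) := by
    apply Metric.isBounded_closedBall (x := (0 : Fin n → ℝ)) (r := M) |>.subset
    intro x hx
    rw [Metric.mem_closedBall]
    rw [dist_pi_le_iff hM0.le]
    intro i
    have := hx i (Set.mem_univ i)
    rw [Real.dist_eq, Pi.zero_apply, sub_zero]
    exact abs_le.mpr this
  -- J vs K
  have hmeasΩ : MeasurableSet Ω := hΩo.measurableSet
  have hJup : ∫ x in Ω, (Λ x)⁻¹ ≤ m⁻¹ * ∫ x in Ω, G x := by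
    rw [← MeasureTheory.integral_const_mul]
    apply MeasureTheory.setIntegral_mono_on (integ _ hΛinvcont Ω hΩb)
      ((integ _ hGcont Ω hΩb).const_mul _) hmeasΩ
    exact fun x _ => hinv_up x
  have hJlo : CS⁻¹ * ∫ x in Ω, G x ≤ ∫ x in Ω, (Λ x)⁻¹ := by
    rw [← MeasureTheory.integral_const_mul]
    apply MeasureTheory.setIntegral_mono_on
      ((integ _ hGcont Ω hΩb).const_mul _) (integ _ hΛinvcont Ω hΩb) hmeasΩ
    exact fun x _ => hinv_lo x
  -- K vs box/cube
  have hGnonneg : ∀ x, 0 ≤ G x := by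
    intro x
    exact (inv_pos.mpr (hABpos x)).le
  have hKup : ∫ x in Ω, G x ≤ ∫ x in Set.pi Set.univ (fun _ : Fin n => Set.Icc (-M) M), G x :=
    MeasureTheory.setIntegral_mono_set (integ _ hGcont _ hboxbdd)
      (Filter.Eventually.of_forall hGnonneg) hbox.eventuallyLE
  have hKlo : ∫ x in Set.pi Set.univ (fun _ : Fin n => Set.Icc (-δ) δ), G x ≤ ∫ x in Ω, G x :=
    MeasureTheory.setIntegral_mono_set (integ _ hGcont Ω hΩb)
      (Filter.Eventually.of_forall hGnonneg) hcube.eventuallyLE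
  -- Fubini
  have hvol : ∀ ρ : ℝ, 0 < ρ → (volume (Set.Icc (-ρ) ρ)).toReal = 2 * ρ := by
    intro ρ hρ
    rw [Real.volume_Icc, ENNReal.toReal_ofReal (by linarith)]
    ring
  have hfub : ∀ ρ : ℝ, 0 < ρ →
      ∫ x in Set.pi Set.univ (fun _ : Fin n => Set.Icc (-ρ) ρ), G x
        = (2*ρ) ^ (n-1) * (2 * ∫ t in (0:ℝ)..ρ, (t ^ β * r^w + r^Q)⁻¹) := by
    intro ρ hρ
    have h1 := aux_fubini j g1 ρ
    rw [hvol ρ hρ] at h1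
    have h2 : ∫ t in Set.Icc (-ρ) ρ, g1 t
        = 2 * ∫ t in (0:ℝ)..ρ, (t ^ β * r^w + r^Q)⁻¹ := by
      rw [hg1def]
      rw [aux_sym hβ0.le hb.le ha hρ.le, aux_strip_abs hρ.le]
    rw [h2] at h1
    exact h1
  constructor
  · calc CS⁻¹ * ((2*δ) ^ (n-1) * (2 * ∫ t in (0:ℝ)..δ, (t ^ β * r^w + r^Q)⁻¹))
        = CS⁻¹ * ∫ x in Set.pi Set.univ (fun _ : Fin n => Set.Icc (-δ) δ), G x := by
          rw [hfub δ hδ0]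
      _ ≤ CS⁻¹ * ∫ x in Ω, G x :=
          mul_le_mul_of_nonneg_left hKlo (inv_pos.mpr hCS).le
      _ ≤ ∫ x in Ω, (Λ x)⁻¹ := hJlo
  · calc ∫ x in Ω, (Λ x)⁻¹ ≤ m⁻¹ * ∫ x in Ω, G x := hJup
      _ ≤ m⁻¹ * ∫ x in Set.pi Set.univ (fun _ : Fin n => Set.Icc (-M) M), G x :=
          mul_le_mul_of_nonneg_left hKup (inv_pos.mpr hm).le
      _ = m⁻¹ * ((2*M) ^ (n-1) * (2 * ∫ t in (0:ℝ)..M, (t ^ β * r^w + r^Q)⁻¹)) := by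
          rw [hfub M hM0]

/-- For `Λ(x,r) = Σ_{k=w}^{Q} c_k |x_j|^{(Q−k)/α} r^k` with `c_k = 0` whenever
`(Q−k)/α ∉ ℕ`, `c_w, c_Q > 0`, and `J_Ω(r) = ∫_Ω Λ(x,r)⁻¹ dx` over a bounded open set `Ω`
containing the origin: if `Q − w = α` then `J_Ω(r) ≈ r^{−(Q−α)} ln(1/r)` as `r → 0⁺`, and if
`Q − w > α` then `J_Ω(r) ≈ r^{−(Q−α)}` as `r → 0⁺`. -/
theorem stmt3 (n : ℕ) (hn : 1 ≤ n) (j : Fin n) (α w Q : ℕ)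
    (hα : 1 ≤ α) (hw : 0 < w) (hwQ : w < Q) (hαQw : α ≤ Q - w)
    (c : ℕ → ℝ)
    (hc_nonneg : ∀ k ∈ Finset.Icc w Q, 0 ≤ c k)
    (hc_zero : ∀ k ∈ Finset.Icc w Q, ¬ (α ∣ (Q - k)) → c k = 0)
    (hcw : 0 < c w) (hcQ : 0 < c Q)
    (Ω : Set (Fin n → ℝ)) (hΩo : IsOpen Ω) (hΩb : Bornology.IsBounded Ω)
    (hΩ0 : (0 : Fin n → ℝ) ∈ Ω) :
    (Q - w = α →
      ∃ C : ℝ, 1 ≤ C ∧ ∃ r₀ : ℝ, 0 < r₀ ∧ r₀ < 1 ∧ ∀ r : ℝ, 0 < r → r < r₀ →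
        C⁻¹ * (Real.log (1/r) / r ^ (Q - α)) ≤
          (∫ x in Ω, (∑ k ∈ Finset.Icc w Q,
            c k * |x j| ^ (((Q : ℝ) - k) / α) * r ^ k)⁻¹) ∧
        (∫ x in Ω, (∑ k ∈ Finset.Icc w Q,
            c k * |x j| ^ (((Q : ℝ) - k) / α) * r ^ k)⁻¹) ≤
          C * (Real.log (1/r) / r ^ (Q - α))) ∧
    (α < Q - w →
      ∃ C : ℝ, 1 ≤ C ∧ ∃ r₀ : ℝ, 0 < r₀ ∧ r₀ < 1 ∧ ∀ r : ℝ, 0 < r → r < r₀ →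
        C⁻¹ * (1 / r ^ (Q - α)) ≤
          (∫ x in Ω, (∑ k ∈ Finset.Icc w Q,
            c k * |x j| ^ (((Q : ℝ) - k) / α) * r ^ k)⁻¹) ∧
        (∫ x in Ω, (∑ k ∈ Finset.Icc w Q,
            c k * |x j| ^ (((Q : ℝ) - k) / α) * r ^ k)⁻¹) ≤
          C * (1 / r ^ (Q - α))) := by
  -- geometry: bounding box and inner cube
  obtain ⟨R, hR⟩ := hΩb.subset_closedBall 0
  set M : ℝ := max R 1 with hMdef
  have hM0 : (0:ℝ) < M := lt_of_lt_of_le one_pos (le_max_right _ _)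
  have hbox : Ω ⊆ Set.pi Set.univ (fun _ : Fin n => Set.Icc (-M) M) := by
    intro x hx i _
    have h1 : dist x 0 ≤ R := hR hx
    have h2 : dist (x i) ((0 : Fin n → ℝ) i) ≤ dist x 0 := dist_le_pi_dist x 0 i
    rw [Pi.zero_apply, Real.dist_eq, sub_zero] at h2
    exact abs_le.mp (le_trans (h2.trans h1) (le_max_left _ _))
  obtain ⟨ε, hε0, hball⟩ := Metric.isOpen_iff.mp hΩo 0 hΩ0
  set δ : ℝ := min (ε/2) M with hδdef
  have hδ0 : 0 < δ := lt_min (by linarith) hM0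
  have hδM : δ ≤ M := min_le_right _ _
  have hcube : Set.pi Set.univ (fun _ : Fin n => Set.Icc (-δ) δ) ⊆ Ω := by
    intro x hx
    apply hball
    rw [Metric.mem_ball]
    have hd : dist x 0 ≤ δ := by
      rw [dist_pi_le_iff hδ0.le]
      intro i
      rw [Pi.zero_apply, Real.dist_eq, sub_zero]
      exact abs_le.mpr (hx i (Set.mem_univ i))
    calc dist x 0 ≤ δ := hd
      _ ≤ ε/2 := min_le_left _ _
      _ < ε := by linarith
  -- shared constants
  have hα0 : 0 < α := hα
  have hαR : (0:ℝ) < (α:ℝ) := by exact_mod_cast hα0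
  set m : ℝ := min (c w) (c Q) with hmdef
  have hm : 0 < m := lt_min hcw hcQ
  set CS : ℝ := c w + c Q + ∑ k ∈ Finset.Icc w Q, c k with hCSdef
  have hsum_nonneg : (0:ℝ) ≤ ∑ k ∈ Finset.Icc w Q, c k := Finset.sum_nonneg hc_nonneg
  have hCS : 0 < CS := by positivity
  have hchain := fun (r : ℝ) (hr : 0 < r) =>
    aux_chain n j α w Q hα hwQ hαQw c hc_nonneg hcw hcQ Ω hΩo hΩb M δ hδ0 hδM hcube hbox r hr
  have h2Mpos : (0:ℝ) < (2*M)^(n-1) := by positivity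
  have h2δpos : (0:ℝ) < (2*δ)^(n-1) := by positivity
  constructor
  · -- CASE 1 : Q - w = α
    intro h1
    have hQeq : Q = w + α := by omega
    have hQα : Q - α = w := by omega
    have hβeq : ((Q:ℝ) - w)/α = 1 := by
      have hc1 : ((Q:ℕ):ℝ) = ((w + α : ℕ):ℝ) := by rw [hQeq]
      push_cast at hc1
      have : (Q:ℝ) - w = α := by linarith
      rw [this]
      exact div_self hαR.ne'
    set Cu : ℝ := m⁻¹ * ((2*M)^(n-1) * (2 * ((α:ℝ)+1))) with hCudef
    set Cl : ℝ := CS⁻¹ * ((2*δ)^(n-1) * (2 * ((α:ℝ)/2))) with hCldef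
    have hCu : 0 < Cu := by positivity
    have hCl : 0 < Cl := by positivity
    obtain ⟨C, hC1, hCprop⟩ := aux_pick hCl hCu
    set E : ℝ := (2/α) * |Real.log δ| + |Real.log (M+1)| + 1 with hEdef
    have hEnn : 0 ≤ (2/(α:ℝ)) * |Real.log δ| := by positivity
    refine ⟨C, hC1, min (min δ (1/2)) (Real.exp (-E)), ?_, ?_, ?_⟩
    · exact lt_min (lt_min hδ0 (by norm_num)) (Real.exp_pos _)
    · calc min (min δ (1/2)) (Real.exp (-E)) ≤ min δ (1/2) := min_le_left _ _
        _ ≤ 1/2 := min_le_right _ _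
        _ < 1 := by norm_num
    · intro r hr hrr₀
      have hrhalf : r < 1/2 :=
        lt_of_lt_of_le hrr₀ (le_trans (min_le_left _ _) (min_le_right _ _))
      have hr1 : r < 1 := by linarith
      have hrδ : r < δ :=
        lt_of_lt_of_le hrr₀ (le_trans (min_le_left _ _) (min_le_left _ _))
      set L : ℝ := Real.log (1/r) with hLdef
      have hL : L = -Real.log r := by rw [hLdef, one_div, Real.log_inv]
      have hLpos : 0 < L := by
        rw [hL]
        linarith [Real.log_neg hr hr1]
      have hElt : E < L := by
        have hre : r < Real.exp (-E) := lt_of_lt_of_le hrr₀ (min_le_right _ _)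
        have := Real.log_lt_log hr hre
        rw [Real.log_exp] at this
        rw [hL]
        linarith
      obtain ⟨hlo, hup⟩ := hchain r hr
      rw [hβeq] at hlo hup
      simp_rw [Real.rpow_one] at hlo hup
      have hIM : ∫ t in (0:ℝ)..M, (t * r^w + r^Q)⁻¹
          = (r^w)⁻¹ * Real.log ((M*r^w + r^Q)/r^Q) :=
        aux_log_eq (pow_pos hr w) (pow_pos hr Q) hM0.le
      have hIδ : ∫ t in (0:ℝ)..δ, (t * r^w + r^Q)⁻¹
          = (r^w)⁻¹ * Real.log ((δ*r^w + r^Q)/r^Q) :=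
        aux_log_eq (pow_pos hr w) (pow_pos hr Q) hδ0.le
      have hrw : (0:ℝ) < r^w := pow_pos hr w
      have hrα : (0:ℝ) < r^α := pow_pos hr α
      have hfrac : ∀ ρ:ℝ, (ρ * r^w + r^Q)/r^Q = (ρ + r^α)/r^α := by
        intro ρ
        rw [hQeq, pow_add]
        rw [div_eq_div_iff (by positivity) (by positivity)]
        ring
      have hlogsplit : ∀ ρ:ℝ, 0 < ρ → Real.log ((ρ + r^α)/r^α)
          = Real.log (ρ + r^α) + α * L := by
        intro ρ hρ
        rw [Real.log_div (by positivity) (by positivity), Real.log_pow, hL]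
        ring
      have hrα1 : r^α ≤ 1 := pow_le_one₀ hr.le hr1.le
      have hup_log : Real.log (M + r^α) + α * L ≤ ((α:ℝ)+1) * L := by
        have ha1 : Real.log (M + r^α) ≤ Real.log (M+1) :=
          Real.log_le_log (by positivity) (by linarith)
        have ha2 : Real.log (M+1) ≤ |Real.log (M+1)| := le_abs_self _
        have ha3 : |Real.log (M+1)| < L := by
          rw [hEdef] at hElt; linarith
        linarith
      have hlo_log : ((α:ℝ)/2) * L ≤ Real.log (δ + r^α) + α * L := by
        have hb1 : Real.log δ ≤ Real.log (δ + r^α) :=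
          Real.log_le_log hδ0 (by linarith)
        have hb2 : -Real.log δ ≤ |Real.log δ| := neg_le_abs _
        have hb3 : |Real.log δ| ≤ ((α:ℝ)/2) * L := by
          have hc2 : (2/(α:ℝ)) * |Real.log δ| ≤ L := by
            rw [hEdef] at hElt
            linarith [abs_nonneg (Real.log (M+1))]
          calc |Real.log δ| = ((α:ℝ)/2) * ((2/α) * |Real.log δ|) := by
                field_simp
            _ ≤ ((α:ℝ)/2) * L := mul_le_mul_of_nonneg_left hc2 (by positivity)
        have : (α:ℝ) * L = ((α:ℝ)/2) * L + ((α:ℝ)/2) * L := by ring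
        linarith
      rw [hIM, hfrac M, hlogsplit M hM0] at hup
      rw [hIδ, hfrac δ, hlogsplit δ hδ0] at hlo
      have hXpos : 0 ≤ L / r^(Q-α) := div_nonneg hLpos.le (pow_pos hr _).le
      apply hCprop (L / r^(Q-α)) _ hXpos
      · -- lower:  Cl * X ≤ chain-lower ≤ J
        refine le_trans ?_ hlo
        have hstep : CS⁻¹ * ((2*δ)^(n-1) * (2 * ((r^w)⁻¹ * (((α:ℝ)/2) * L))))
            ≤ CS⁻¹ * ((2*δ)^(n-1) * (2 * ((r^w)⁻¹ * (Real.log (δ + r^α) + α * L)))) := by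
          gcongr
        calc Cl * (L / r^(Q-α))
            = CS⁻¹ * ((2*δ)^(n-1) * (2 * ((r^w)⁻¹ * (((α:ℝ)/2) * L)))) := by
              rw [hCldef, hQα, div_eq_mul_inv]; ring
          _ ≤ _ := hstep
      · -- upper
        refine le_trans hup ?_
        have hstep : m⁻¹ * ((2*M)^(n-1) * (2 * ((r^w)⁻¹ * (Real.log (M + r^α) + α * L))))
            ≤ m⁻¹ * ((2*M)^(n-1) * (2 * ((r^w)⁻¹ * (((α:ℝ)+1) * L)))) := by
          gcongr
        refine hstep.trans (le_of_eq ?_)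
        rw [hCudef, hQα, div_eq_mul_inv]; ring
  · -- CASE 2 : α < Q - w
    intro h2
    have hcast : ((Q - w : ℕ) : ℝ) = (Q:ℝ) - w := Nat.cast_sub hwQ.le
    have hQwR : (0:ℝ) < (Q:ℝ) - w := by
      have : (w:ℝ) < Q := by exact_mod_cast hwQ
      linarith
    set β : ℝ := ((Q:ℝ) - w) / α with hβdef
    have hβgt : 1 < β := by
      rw [hβdef, lt_div_iff₀ hαR, one_mul, ← hcast]
      exact_mod_cast h2
    have hβ0 : (0:ℝ) < β := by linarith
    set Cu : ℝ := m⁻¹ * ((2*M)^(n-1) * (2 * (1 + (β-1)⁻¹))) with hCudef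
    set Cl : ℝ := CS⁻¹ * ((2*δ)^(n-1) * (2 * (1/2))) with hCldef
    have hβ1pos : (0:ℝ) < β - 1 := by linarith
    have hCu : 0 < Cu := by positivity
    have hCl : 0 < Cl := by positivity
    obtain ⟨C, hC1, hCprop⟩ := aux_pick hCl hCu
    refine ⟨C, hC1, min δ (1/2), lt_min hδ0 (by norm_num), ?_, ?_⟩
    · calc min δ (1/2) ≤ 1/2 := min_le_right _ _
        _ < 1 := by norm_num
    · intro r hr hrr₀
      have hrhalf : r < 1/2 := lt_of_lt_of_le hrr₀ (min_le_right _ _)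
      have hr1 : r < 1 := by linarith
      have hrδ : r < δ := lt_of_lt_of_le hrr₀ (min_le_left _ _)
      have hrw : (0:ℝ) < r^w := pow_pos hr w
      have hrQ : (0:ℝ) < r^Q := pow_pos hr Q
      have hrα : (0:ℝ) < r^α := pow_pos hr α
      have hsδ : r^α ≤ δ := by
        calc (r:ℝ)^α ≤ r^1 := pow_le_pow_of_le_one hr.le hr1.le hα
          _ = r := pow_one r
          _ ≤ δ := hrδ.le
      have hsM : r^α ≤ M := hsδ.trans hδM
      have hkey : ((r^α : ℝ)) ^ β * r ^ w = r ^ Q := by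
        rw [← Real.rpow_natCast r α, ← Real.rpow_mul hr.le]
        have he : (α:ℝ) * β = ((Q - w : ℕ) : ℝ) := by
          rw [hβdef, hcast]; field_simp
        rw [he, Real.rpow_natCast, ← pow_add]
        congr 1
        omega
      have hE : ((r^α : ℝ)) ^ ((1:ℝ) - β) * (r ^ w)⁻¹ = r ^ α * (r ^ Q)⁻¹ := by
        rw [← Real.rpow_natCast r α, ← Real.rpow_mul hr.le,
          ← Real.rpow_natCast r w, ← Real.rpow_natCast r Q,
          ← Real.rpow_neg hr.le, ← Real.rpow_neg hr.le,
          ← Real.rpow_add hr, ← Real.rpow_add hr]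
        congr 1
        rw [hβdef]
        field_simp
        ring
      have hX : r ^ α * (r ^ Q)⁻¹ = 1 / r ^ (Q - α) := by
        have hQsplit : r ^ Q = r ^ (Q - α) * r ^ α := by
          rw [← pow_add]; congr 1; omega
        rw [hQsplit, one_div, mul_inv]
        field_simp
      obtain ⟨hlo, hup⟩ := hchain r hr
      -- 1-D bounds
      have hIup : ∫ t in (0:ℝ)..M, (t ^ β * r^w + r^Q)⁻¹
          ≤ (1 + (β-1)⁻¹) * (1 / r ^ (Q - α)) := by
        have h := aux_pow_upper hβgt hrw hrQ hrα hsM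
        refine h.trans (le_of_eq ?_)
        have e1 : (r^α : ℝ)/(r^Q) = r^α * (r^Q)⁻¹ := div_eq_mul_inv _ _
        have e2 : (r^w : ℝ)⁻¹ * ((r^α) ^ ((1:ℝ)-β) / (β-1))
            = (β-1)⁻¹ * (r^α * (r^Q)⁻¹) := by
          rw [div_eq_mul_inv, ← hE]; ring
        rw [e1, e2, hX]
        ring
      have hIlo : (1/2) * (1 / r ^ (Q - α)) ≤ ∫ t in (0:ℝ)..δ, (t ^ β * r^w + r^Q)⁻¹ := by
        have h := aux_pow_lower hβ0 hrw.le hrQ hrα hsδ (le_of_eq hkey)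
        refine le_trans (le_of_eq ?_) h
        rw [← hX, div_eq_mul_inv (r ^ α) (2 * r ^ Q), mul_inv]
        ring
      have hXpos : (0:ℝ) ≤ 1 / r^(Q-α) := by positivity
      apply hCprop (1 / r^(Q-α)) _ hXpos
      · refine le_trans ?_ hlo
        have hstep : CS⁻¹ * ((2*δ)^(n-1) * (2 * ((1/2) * (1 / r ^ (Q - α)))))
            ≤ CS⁻¹ * ((2*δ)^(n-1) * (2 * ∫ t in (0:ℝ)..δ, (t ^ β * r^w + r^Q)⁻¹)) := by
          gcongr
        refine le_trans (le_of_eq ?_) hstep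
        rw [hCldef]; ring
      · refine le_trans hup ?_
        have hstep : m⁻¹ * ((2*M)^(n-1) * (2 * ∫ t in (0:ℝ)..M, (t ^ β * r^w + r^Q)⁻¹))
            ≤ m⁻¹ * ((2*M)^(n-1) * (2 * ((1 + (β-1)⁻¹) * (1 / r ^ (Q - α))))) := by
          gcongr
        refine hstep.trans (le_of_eq ?_)
        rw [hCudef]; ring
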